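/- Assume there exist constants c₀, c > 0 such that Ĝ(t) ≤ c₀ e^{−c|t|} for all t ∈ ℝ. Then for every infinite subset A of the segment [−1,1] and every x ∈ [−1,1], the function φ_x belongs to the closed linear span of the family {φ_y : y ∈ A} in L²(ℝ, Ĝ(t)dt). (Via the canonical isometry ξ_x ↦ φ_x, this says that every random variable ξ_x of the centered stationary Gaussian process with spectral density Ĝ belongs to the closed linear span of (ξ_y)_{y∈A} in L²(Ω,P).) -/

import Mathlib

open MeasureTheory

lemma integrable_exp_neg_mul_abs' {d : ℝ} (hd : 0 < d) :
    Integrable (fun t : ℝ => Real.exp (-d * |t|)) := by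
  have h1 : IntegrableOn (fun t : ℝ => Real.exp (-d * |t|)) (Set.Ioi (0:ℝ)) :=
    (exp_neg_integrableOn_Ioi 0 hd).congr_fun
      (fun t ht => by rw [abs_of_pos ht]) measurableSet_Ioi
  have h2 : IntegrableOn (fun t : ℝ => Real.exp (-d * |t|)) (Set.Iio (0:ℝ)) := by
    have h3 := (MeasurePreserving.integrableOn_comp_preimage
      (Measure.measurePreserving_neg (volume : Measure ℝ))
      (Homeomorph.neg ℝ).measurableEmbedding).2 h1
    have hpre : (Neg.neg : ℝ → ℝ) ⁻¹' Set.Ioi 0 = Set.Iio 0 := by ext t; simp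
    simpa [Function.comp_def, abs_neg, hpre] using h3
  have h4 : IntegrableOn (fun t : ℝ => Real.exp (-d * |t|)) (Set.Iic (0:ℝ)) :=
    (integrableOn_Iic_iff_integrableOn_Iio (by simp)).2 h2
  have := h4.union h1
  rwa [Set.Iic_union_Ioi, integrableOn_univ] at this

/-- If the spectral density `Ĝ` satisfies `Ĝ(t) ≤ c₀ e^{-c|t|}`, then for every
infinite subset `A ⊆ [-1,1]` and every `x ∈ [-1,1]`, the exponential `φ_x(t) = e^{ixt}` lies in
the closed linear span of `{φ_y : y ∈ A}` in `L²(ℝ, Ĝ(t)dt)`. -/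
theorem exp_mem_closed_span_of_infinite
    (Ghat : ℝ → ℝ) (hcont : Continuous Ghat) (heven : ∀ t, Ghat (-t) = Ghat t)
    (hpos : ∀ t, 0 < Ghat t) (hint : Integrable Ghat)
    (c₀ c : ℝ) (hc₀ : 0 < c₀) (hc : 0 < c)
    (hdecay : ∀ t : ℝ, Ghat t ≤ c₀ * Real.exp (-c * |t|))
    (μ : Measure ℝ) (hμ : μ = volume.withDensity (fun t => ENNReal.ofReal (Ghat t)))
    (φ : ℝ → Lp ℂ 2 μ)
    (hφ : ∀ x : ℝ, (φ x : ℝ → ℂ) =ᵐ[μ]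
      fun t => Complex.exp (Complex.I * (x : ℂ) * (t : ℂ)))
    (A : Set ℝ) (hA : A ⊆ Set.Icc (-1 : ℝ) 1) (hAinf : A.Infinite) :
    ∀ x ∈ Set.Icc (-1 : ℝ) 1,
      φ x ∈ closure ((Submodule.span ℂ (φ '' A) : Submodule ℂ (Lp ℂ 2 μ)) : Set (Lp ℂ 2 μ)) := by
  intro x _hx
  rw [← Submodule.topologicalClosure_coe, ← Submodule.orthogonal_orthogonal_eq_closure,
    SetLike.mem_coe, Submodule.mem_orthogonal]
  intro v hv
  have hvy : ∀ y ∈ A, (inner ℂ (φ y) v : ℂ) = 0 := fun y hy =>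
    hv (φ y) (Submodule.subset_span ⟨y, hy, rfl⟩)
  set V : ℝ → ℂ := (v : ℝ → ℂ) with hV
  have hVmeas : AEStronglyMeasurable V μ := Lp.aestronglyMeasurable v
  have hVmem : MemLp V 2 μ := Lp.memLp v
  -- the analytic function
  set G : ℂ → ℂ := fun z => ∫ t, Complex.exp (-(Complex.I * t) * z) * V t ∂μ with hGdef
  have hinner : ∀ y : ℝ, (inner ℂ (φ y) v : ℂ) = G (y : ℂ) := by
    intro y
    rw [L2.inner_def]
    refine integral_congr_ae ?_
    filter_upwards [hφ y] with t ht
    rw [RCLike.inner_apply', ht, ← Complex.exp_conj]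
    congr 2
    simp only [map_mul, Complex.conj_I, Complex.conj_ofReal]
    ring
  have hGzero : ∀ y ∈ A, G (y : ℂ) = 0 := fun y hy => by
    rw [← hinner y]; exact hvy y hy
  -- the weight and the bound
  set w : ℝ → ℝ := fun t => Real.exp (c/4 * |t|) * (|t| + 1) with hw
  have hwcont : Continuous w :=
    ((continuous_const.mul continuous_abs).rexp).mul (continuous_abs.add continuous_const)
  have hwmem : MemLp w 2 μ := by
    rw [memLp_two_iff_integrable_sq hwcont.aestronglyMeasurable, hμ,
      integrable_withDensity_iff hcont.measurable.ennreal_ofReal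
        (Filter.Eventually.of_forall fun t => ENNReal.ofReal_lt_top)]
    have hre : (fun t => w t ^ 2 * (ENNReal.ofReal (Ghat t)).toReal)
        = fun t => w t ^ 2 * Ghat t := funext fun t => by
      rw [ENNReal.toReal_ofReal (hpos t).le]
    rw [hre]
    set ε : ℝ := min (c/8) 1 with hε
    have hε0 : 0 < ε := lt_min (by positivity) one_pos
    have hε1 : ε ≤ 1 := min_le_right _ _
    have hεc : ε ≤ c/8 := min_le_left _ _
    refine Integrable.mono' ((integrable_exp_neg_mul_abs' (d := c/4)
        (by positivity)).const_mul (c₀ / ε^2))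
      (((hwcont.pow 2).mul hcont).aestronglyMeasurable)
      (Filter.Eventually.of_forall fun t => ?_)
    have h0t : (0:ℝ) ≤ |t| := abs_nonneg t
    have h1 : |t| + 1 ≤ ε⁻¹ * Real.exp (ε * |t|) := by
      have h2 : ε * (|t| + 1) ≤ ε * |t| + 1 := by nlinarith
      have h3 : ε * |t| + 1 ≤ Real.exp (ε * |t|) := Real.add_one_le_exp _
      calc |t| + 1 = ε⁻¹ * (ε * (|t| + 1)) := by field_simp
      _ ≤ ε⁻¹ * Real.exp (ε * |t|) := by
          exact mul_le_mul_of_nonneg_left (h2.trans h3) (inv_nonneg.2 hε0.le)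
    have hwle : w t ≤ ε⁻¹ * Real.exp ((c/4 + ε) * |t|) := by
      calc w t ≤ Real.exp (c/4 * |t|) * (ε⁻¹ * Real.exp (ε * |t|)) := by
            exact mul_le_mul_of_nonneg_left h1 (Real.exp_nonneg _)
      _ = ε⁻¹ * Real.exp ((c/4 + ε) * |t|) := by
            rw [add_mul, Real.exp_add]; ring
    have hwnonneg : 0 ≤ w t := by positivity
    have hnorm : ‖w t ^ 2 * Ghat t‖ = w t ^ 2 * Ghat t := by
      rw [Real.norm_eq_abs, abs_of_nonneg (mul_nonneg (sq_nonneg _) (hpos t).le)]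
    rw [hnorm]
    calc w t ^ 2 * Ghat t
        ≤ (ε⁻¹ * Real.exp ((c/4 + ε) * |t|))^2 * (c₀ * Real.exp (-c * |t|)) := by
          apply mul_le_mul (pow_le_pow_left₀ hwnonneg hwle 2) (hdecay t) (hpos t).le
            (by positivity)
      _ = (c₀ / ε^2) * Real.exp ((2*(c/4+ε) - c) * |t|) := by
          rw [mul_pow, pow_two (Real.exp _),
            show (2*(c/4+ε) - c) * |t| = (c/4+ε)*|t| + ((c/4+ε)*|t| + (-c)*|t|) by ring,
            Real.exp_add, Real.exp_add, inv_pow, div_eq_mul_inv]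
          ring
      _ ≤ (c₀ / ε^2) * Real.exp (-(c/4) * |t|) := by
          apply mul_le_mul_of_nonneg_left _ (by positivity)
          apply Real.exp_le_exp.2
          apply mul_le_mul_of_nonneg_right _ h0t
          linarith
  set bound : ℝ → ℝ := fun t => w t * ‖V t‖ with hbound
  have hbound_int : Integrable bound μ := by
    have hsmul : MemLp (w • fun t => ‖V t‖) 1 μ :=
      (hVmem.norm).smul hwmem
    have : (w • fun t => ‖V t‖) = bound := by
      funext t; simp [hbound, Pi.smul_apply, smul_eq_mul]
    rw [this] at hsmul
    exact memLp_one_iff_integrable.1 hsmul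
  -- continuity in t of kernels
  have hFcont : ∀ z : ℂ, Continuous fun t : ℝ => Complex.exp (-(Complex.I * t) * z) :=
    fun z => (((continuous_const.mul Complex.continuous_ofReal).neg.mul
      continuous_const).cexp)
  have hnormexp : ∀ (t : ℝ) (z : ℂ), ‖Complex.exp (-(Complex.I * t) * z)‖
      = Real.exp (t * z.im) := by
    intro t z
    rw [Complex.norm_exp]
    congr 1
    simp [Complex.mul_re]
  have hexp_le : ∀ (t : ℝ) (z : ℂ), |z.im| ≤ c/4 →
      Real.exp (t * z.im) ≤ Real.exp (c/4 * |t|) := by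
    intro t z hzim
    apply Real.exp_le_exp.2
    calc t * z.im ≤ |t * z.im| := le_abs_self _
    _ = |t| * |z.im| := abs_mul _ _
    _ ≤ |t| * (c/4) := mul_le_mul_of_nonneg_left hzim (abs_nonneg t)
    _ = c/4 * |t| := mul_comm _ _
  -- differentiability of G on the strip
  set S : Set ℂ := {z : ℂ | z.im ∈ Set.Ioo (-(c/4)) (c/4)} with hS
  have hSopen : IsOpen S := isOpen_Ioo.preimage Complex.continuous_im
  have hSconv : Convex ℝ S := by
    intro p hp q hq a b ha hb hab
    have := (convex_Ioo (-(c/4)) (c/4)) hp hq ha hb hab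
    simpa [hS, Set.mem_setOf_eq, Complex.add_im, Complex.real_smul,
      Complex.mul_im] using this
  have hmemS : ∀ y : ℝ, (y : ℂ) ∈ S := by
    intro y
    simp only [hS, Set.mem_setOf_eq, Complex.ofReal_im, Set.mem_Ioo]
    constructor <;> [linarith; linarith]
  have hdiff : DifferentiableOn ℂ G S := by
    intro z₀ hz₀
    have hz : |z₀.im| < c/4 := abs_lt.mpr ⟨hz₀.1, hz₀.2⟩
    have hεpos : 0 < c/4 - |z₀.im| := by linarith
    have hball : ∀ z ∈ Metric.ball z₀ (c/4 - |z₀.im|), |z.im| ≤ c/4 := by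
      intro z hzb
      have h1 : |(z - z₀).im| ≤ ‖z - z₀‖ := Complex.abs_im_le_norm _
      have h2 : ‖z - z₀‖ < c/4 - |z₀.im| := by
        rw [← Complex.dist_eq]; exact Metric.mem_ball.1 hzb
      have h3 : |z.im| ≤ |z₀.im| + |(z - z₀).im| := by
        have h4 : z.im = z₀.im + (z - z₀).im := by simp [Complex.sub_im]
        rw [h4]; exact abs_add_le _ _
      linarith
    have key := hasDerivAt_integral_of_dominated_loc_of_deriv_le
      (F := fun (z : ℂ) (t : ℝ) => Complex.exp (-(Complex.I * t) * z) * V t)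
      (F' := fun (z : ℂ) (t : ℝ) =>
        Complex.exp (-(Complex.I * t) * z) * (-(Complex.I * t) * 1) * V t)
      (bound := bound) (μ := μ) (x₀ := z₀) (Metric.ball_mem_nhds z₀ hεpos)
      (Filter.Eventually.of_forall fun z => ((hFcont z).aestronglyMeasurable.mul hVmeas))
      ?_ ?_ ?_ hbound_int ?_
    · exact key.2.differentiableAt.differentiableWithinAt
    · refine hbound_int.mono' ((hFcont z₀).aestronglyMeasurable.mul hVmeas)
        (Filter.Eventually.of_forall fun t => ?_)
      rw [norm_mul, hnormexp]
      have h1 : Real.exp (t * z₀.im) ≤ Real.exp (c/4 * |t|) := hexp_le t z₀ hz.le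
      have h2 : (1:ℝ) ≤ |t| + 1 := by simp [abs_nonneg]
      calc Real.exp (t * z₀.im) * ‖V t‖ ≤ (Real.exp (c/4 * |t|) * (|t| + 1)) * ‖V t‖ := by
            apply mul_le_mul_of_nonneg_right _ (norm_nonneg _)
            calc Real.exp (t * z₀.im) = Real.exp (t * z₀.im) * 1 := (mul_one _).symm
            _ ≤ Real.exp (c/4 * |t|) * (|t| + 1) :=
                mul_le_mul h1 h2 zero_le_one (Real.exp_nonneg _)
      _ = bound t := rfl
    · exact ((hFcont z₀).mul ((continuous_const.mul
        Complex.continuous_ofReal).neg.mul continuous_const)).aestronglyMeasurable.mul hVmeas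
    · refine Filter.Eventually.of_forall fun t => fun z hzb => ?_
      rw [norm_mul, norm_mul, hnormexp, mul_one, norm_neg]
      have h1 : Real.exp (t * z.im) ≤ Real.exp (c/4 * |t|) := hexp_le t z (hball z hzb)
      have h2 : ‖Complex.I * (t:ℂ)‖ = |t| := by
        simp
      rw [h2]
      have h3 : |t| ≤ |t| + 1 := by linarith
      calc Real.exp (t * z.im) * |t| * ‖V t‖
          ≤ (Real.exp (c/4 * |t|) * (|t| + 1)) * ‖V t‖ := by
            apply mul_le_mul_of_nonneg_right _ (norm_nonneg _)
            exact mul_le_mul h1 h3 (abs_nonneg _) (Real.exp_nonneg _)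
      _ = bound t := rfl
    · refine Filter.Eventually.of_forall fun t => fun z hzb => ?_
      exact (((hasDerivAt_id z).const_mul (-(Complex.I * t))).cexp).mul_const (V t)
  have hanal : AnalyticOnNhd ℂ G S := hdiff.analyticOnNhd hSopen
  -- accumulation point
  obtain ⟨x₀, _hx₀K, hacc⟩ := hAinf.exists_accPt_of_subset_isCompact isCompact_Icc hA
  have hfreq : ∃ᶠ y in nhds x₀, y ≠ x₀ ∧ y ∈ A := accPt_iff_frequently.1 hacc
  have hfreqC : ∃ᶠ z in nhdsWithin (x₀ : ℂ) {(x₀ : ℂ)}ᶜ, G z = 0 := by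
    rw [frequently_nhdsWithin_iff]
    refine (Complex.continuous_ofReal.tendsto x₀).frequently (hfreq.mono ?_)
    rintro y ⟨hy1, hy2⟩
    refine ⟨hGzero y hy2, ?_⟩
    simp only [Set.mem_compl_iff, Set.mem_singleton_iff]
    exact_mod_cast hy1
  have heq : Set.EqOn G 0 S :=
    hanal.eqOn_zero_of_preconnected_of_frequently_eq_zero hSconv.isPreconnected
      (hmemS x₀) hfreqC
  have h0 : (inner ℂ (φ x) v : ℂ) = 0 := by
    rw [hinner x]
    exact heq (hmemS x)
  rw [← inner_conj_symm, h0, map_zero]
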